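/- For any λ = (λ_0,…,λ_d) ∈ K^{d+1}, the linear map ∂^λ = Σ_{i=0}^d λ_i ∂^{(i)} : D ⊗ D → D ⊗ D is tree-compatible (with both the edge-decoration space and the vertex-decoration space equal to D). -/

import Mathlib

open TensorProduct

/-- The endomorphism `φ₁₃ = (τ ⊗ id) ∘ (id ⊗ φ) ∘ (τ ⊗ id)` of `D_E ⊗ D_E ⊗ D_V`,
where `τ` is the flip of the first two factors. -/
noncomputable def phi13 (K : Type*) [CommSemiring K] (E V : Type*)
    [AddCommMonoid E] [Module K E] [AddCommMonoid V] [Module K V]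
    (φ : TensorProduct K E V →ₗ[K] TensorProduct K E V) :
    TensorProduct K E (TensorProduct K E V) →ₗ[K] TensorProduct K E (TensorProduct K E V) :=
  (TensorProduct.leftComm K E E V).toLinearMap ∘ₗ LinearMap.lTensor E φ ∘ₗ
    (TensorProduct.leftComm K E E V).toLinearMap

/-- `φ` is tree-compatible if `φ₁₃ ∘ φ₂₃ = φ₂₃ ∘ φ₁₃`, where `φ₂₃ = id ⊗ φ`. -/
noncomputable def TreeCompatible (K : Type*) [CommSemiring K] (E V : Type*)
    [AddCommMonoid E] [Module K E] [AddCommMonoid V] [Module K V]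
    (φ : TensorProduct K E V →ₗ[K] TensorProduct K E V) : Prop :=
  phi13 K E V φ ∘ₗ LinearMap.lTensor E φ = LinearMap.lTensor E φ ∘ₗ phi13 K E V φ
/-- For any `λ ∈ K^{d+1}`, the map `∂^λ = Σ_i λ_i ∂^{(i)} : D ⊗ D → D ⊗ D` is
tree-compatible, where `D` is the free `K`-vector space on `ℕ^{d+1}` (a vector space
with a basis `e` indexed by `ℕ^{d+1}`). -/
theorem partial_lambda_treeCompatible (K : Type*) [Field K] [CharZero K] (d : ℕ)
    (D : Type*) [AddCommGroup D] [Module K D] (e : Module.Basis (Fin (d + 1) → ℕ) K D)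
    (del : Fin (d + 1) → (TensorProduct K D D →ₗ[K] TensorProduct K D D))
    (hdel : ∀ (j : Fin (d + 1)) (a b : Fin (d + 1) → ℕ),
      del j (e a ⊗ₜ e b) =
        if 1 ≤ a j ∧ 1 ≤ b j then
          (b j : K) • (e (a - Pi.single j 1) ⊗ₜ[K] e (b - Pi.single j 1))
        else 0)
    (lam : Fin (d + 1) → K) :
    TreeCompatible K D D (∑ i, lam i • del i) := by
  classical
  set Φ : TensorProduct K D D →ₗ[K] TensorProduct K D D := ∑ i, lam i • del i with hPhidef
  have hPhi : ∀ x y : Fin (d + 1) → ℕ, Φ (e x ⊗ₜ e y)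
      = ∑ j, (if 1 ≤ x j ∧ 1 ≤ y j then lam j * (y j : K) else 0) •
          (e (x - Pi.single j 1) ⊗ₜ[K] e (y - Pi.single j 1)) := by
    intro x y
    rw [hPhidef, LinearMap.sum_apply]
    refine Finset.sum_congr rfl fun j _ => ?_
    rw [LinearMap.smul_apply, hdel]
    split_ifs with h
    · rw [smul_smul]
    · rw [smul_zero, zero_smul]
  have h23 : ∀ x y z : Fin (d + 1) → ℕ,
      LinearMap.lTensor D Φ (e x ⊗ₜ (e y ⊗ₜ[K] e z))
      = ∑ j, (if 1 ≤ y j ∧ 1 ≤ z j then lam j * (z j : K) else 0) •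
          (e x ⊗ₜ (e (y - Pi.single j 1) ⊗ₜ[K] e (z - Pi.single j 1))) := by
    intro x y z
    rw [LinearMap.lTensor_tmul, hPhi, TensorProduct.tmul_sum]
    exact Finset.sum_congr rfl fun j _ => by rw [TensorProduct.tmul_smul]
  have h13 : ∀ x y z : Fin (d + 1) → ℕ,
      phi13 K D D Φ (e x ⊗ₜ (e y ⊗ₜ[K] e z))
      = ∑ i, (if 1 ≤ x i ∧ 1 ≤ z i then lam i * (z i : K) else 0) •
          (e (x - Pi.single i 1) ⊗ₜ (e y ⊗ₜ[K] e (z - Pi.single i 1))) := by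
    intro x y z
    simp only [phi13, LinearMap.comp_apply, LinearEquiv.coe_coe,
      TensorProduct.leftComm_tmul, LinearMap.lTensor_tmul, hPhi,
      TensorProduct.tmul_sum, TensorProduct.tmul_smul, map_sum, map_smul]
  unfold TreeCompatible
  refine Module.Basis.ext (Module.Basis.tensorProduct e (Module.Basis.tensorProduct e e)) ?_
  rintro ⟨a, b, c⟩
  simp only [Module.Basis.tensorProduct_apply, LinearMap.comp_apply]
  rw [h23, map_sum, h13, map_sum]
  simp only [map_smul, h13, h23, Finset.smul_sum, smul_smul]
  rw [Finset.sum_comm]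
  refine Finset.sum_congr rfl fun i _ => Finset.sum_congr rfl fun j _ => ?_
  have hcc : c - Pi.single j 1 - Pi.single i 1 = c - Pi.single i 1 - Pi.single j 1 := by
    funext k
    simp only [Pi.sub_apply]
    omega
  rw [hcc]
  congr 1
  by_cases hij : i = j
  · subst hij
    simp only [Pi.sub_apply, Pi.single_eq_same]
    split_ifs <;> first | ring1 | (exfalso; omega)
  · have e1 : (c - Pi.single j 1 : Fin (d + 1) → ℕ) i = c i := by
      simp [Pi.sub_apply, Pi.single_eq_of_ne hij]
    have e2 : (c - Pi.single i 1 : Fin (d + 1) → ℕ) j = c j := by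
      simp [Pi.sub_apply, Pi.single_eq_of_ne (Ne.symm hij)]
    rw [e1, e2]
    split_ifs <;> first | ring1 | (exfalso; tauto)
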